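/- arXiv:2101.04891 — 2 statements merged into one kernel-verified Lean document; each statement's English description precedes it below -/
import Mathlib

section
/- Let R be a ring and let C1, C2, C12 be chain complexes of R-modules indexed by ℤ. Let φ : C1 ⊕ C2 → C1 ⊕ C2 ⊕ C12 be the chain map given in each degree by φ(x, y) = (x, −y, 0). Let F = (mappingCone φ)⟦−1⟧ be the homotopy fiber of φ, with F_n = (C1 ⊕ C2)_n ⊕ (C1 ⊕ C2 ⊕ C12)_{n+1}, and let p : F → C1 ⊕ C2 be the canonical chain map given in each degree by (a, b) ↦ a. Then the composite chain maps pr_{C1} ∘ p : F → C1 and pr_{C2} ∘ p : F → C2 are each chain homotopic to zero. -/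
open CategoryTheory Limits HomologicalComplex

universe u

/-- The chain map `φ : C1 ⊞ C2 ⟶ (C1 ⊞ C2) ⊞ C12` given in each degree by
`φ (x, y) = (x, -y, 0)`. -/
noncomputable def stmtPhi (R : Type u) [Ring R] (C1 C2 C12 : ChainComplex (ModuleCat.{u} R) ℤ) :
    C1 ⊞ C2 ⟶ (C1 ⊞ C2) ⊞ C12 :=
  biprod.fst ≫ biprod.inl ≫ biprod.inl - biprod.snd ≫ biprod.inr ≫ biprod.inl

/-- The homotopy fiber `F = (mappingCone φ)⟦-1⟧` of `φ` : the chain complex with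
`F_n = (C1 ⊞ C2)_n ⊞ ((C1 ⊞ C2) ⊞ C12)_{n+1}` and the usual twisted differential
`d (a, b) = (d a, φ a - d b)`. -/
noncomputable def stmtFiber (R : Type u) [Ring R] (C1 C2 C12 : ChainComplex (ModuleCat.{u} R) ℤ) :
    ChainComplex (ModuleCat.{u} R) ℤ :=
  ChainComplex.of
    (fun n => (C1 ⊞ C2).X n ⊞ ((C1 ⊞ C2) ⊞ C12).X (n + 1))
    (fun n => biprod.lift
      (biprod.fst ≫ (C1 ⊞ C2).d (n + 1) n)
      (biprod.fst ≫ (stmtPhi R C1 C2 C12).f (n + 1) -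
        biprod.snd ≫ ((C1 ⊞ C2) ⊞ C12).d (n + 1 + 1) (n + 1)))
    (fun n => by
      apply biprod.hom_ext
      · simp
      · simp only [Preadditive.comp_sub, Preadditive.sub_comp, Category.assoc,
          biprod.lift_fst_assoc, biprod.lift_snd_assoc, biprod.lift_snd,
          HomologicalComplex.d_comp_d, HomologicalComplex.d_comp_d_assoc, comp_zero, zero_comp,
          Limits.zero_comp, sub_zero, zero_sub, Preadditive.neg_comp, Preadditive.comp_neg]
        rw [HomologicalComplex.Hom.comm, sub_self])

/-- The canonical projection `p : F ⟶ C1 ⊞ C2`, given in each degree by `(a, b) ↦ a`. -/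
noncomputable def stmtP (R : Type u) [Ring R] (C1 C2 C12 : ChainComplex (ModuleCat.{u} R) ℤ) :
    stmtFiber R C1 C2 C12 ⟶ C1 ⊞ C2 where
  f n := (biprod.fst : (C1 ⊞ C2).X n ⊞ ((C1 ⊞ C2) ⊞ C12).X (n + 1) ⟶ (C1 ⊞ C2).X n)
  comm' i j hij := by
    obtain rfl : j + 1 = i := hij
    simp [stmtFiber, ChainComplex.of_d]

noncomputable def auxHomotopy (R : Type u) [Ring R]
    (C1 C2 C12 D : ChainComplex (ModuleCat.{u} R) ℤ)
    (r : (C1 ⊞ C2) ⊞ C12 ⟶ D) (q : C1 ⊞ C2 ⟶ D)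
    (hq : stmtPhi R C1 C2 C12 ≫ r = q) :
    Homotopy (stmtP R C1 C2 C12 ≫ q) 0 where
  hom i j := if h : i + 1 = j then
      (biprod.snd : (C1 ⊞ C2).X i ⊞ ((C1 ⊞ C2) ⊞ C12).X (i + 1) ⟶ _) ≫ r.f (i + 1) ≫
        (D.XIsoOfEq h).hom
    else 0
  zero i j h := dif_neg (fun e => h e)
  comm i := by
    obtain ⟨j, rfl⟩ : ∃ j, i = j + 1 := ⟨i - 1, by ring⟩
    rw [dNext_eq _ (show (ComplexShape.down ℤ).Rel (j+1) j from rfl),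
        prevD_eq _ (show (ComplexShape.down ℤ).Rel (j+1+1) (j+1) from rfl)]
    rw [dif_pos rfl, dif_pos rfl]
    have hd : (stmtFiber R C1 C2 C12).d (j+1) j = biprod.lift
      (biprod.fst ≫ (C1 ⊞ C2).d (j + 1) j)
      (biprod.fst ≫ (stmtPhi R C1 C2 C12).f (j + 1) -
        biprod.snd ≫ ((C1 ⊞ C2) ⊞ C12).d (j + 1 + 1) (j + 1)) := by
      simp [stmtFiber, ChainComplex.of_d]
    rw [hd]
    simp only [XIsoOfEq, eqToIso_refl, Iso.refl_hom, Category.comp_id,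
      HomologicalComplex.comp_f, HomologicalComplex.zero_f_apply, add_zero]
    erw [biprod.lift_snd_assoc]
    erw [Preadditive.sub_comp, Category.assoc]
    erw [← HomologicalComplex.comp_f (stmtPhi R C1 C2 C12) r, hq]
    erw [Category.assoc, Category.assoc, r.comm (j+1+1) (j+1)]
    abel

/-- the composites of the canonical projection `p : F ⟶ C1 ⊞ C2` from the
homotopy fiber of `φ` with the two projections `C1 ⊞ C2 ⟶ C1` and `C1 ⊞ C2 ⟶ C2` are
each chain homotopic to zero. -/
theorem stmt_2 (R : Type u) [Ring R] (C1 C2 C12 : ChainComplex (ModuleCat.{u} R) ℤ) :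
    Nonempty (Homotopy (stmtP R C1 C2 C12 ≫ (biprod.fst : C1 ⊞ C2 ⟶ C1)) 0) ∧
    Nonempty (Homotopy (stmtP R C1 C2 C12 ≫ (biprod.snd : C1 ⊞ C2 ⟶ C2)) 0) := by
  constructor
  · exact ⟨auxHomotopy R C1 C2 C12 C1 (biprod.fst ≫ biprod.fst) biprod.fst
      (by simp [stmtPhi])⟩
  · exact ⟨auxHomotopy R C1 C2 C12 C2 (-(biprod.fst ≫ biprod.snd)) biprod.snd
      (by simp [stmtPhi])⟩
end

section
/- Let R be a commutative ring and σ a type indexing variables. Let L = AddMonoidAlgebra R (σ →₀ ℤ) be the monoid algebra over R on the additive monoid of finitely supported functions σ → ℤ; for such f write X^f ∈ L for the corresponding monomial (basis element). For a finite subset U ⊆ σ, let B_U ⊆ L denote the R-submodule spanned by the monomials X^f with f j ≥ 0 for all j ∉ U. Let T ⊆ σ be a finite subset. Then: (1) for every S ⊆ T the inclusion of R-modules B_S ⊆ B_T admits an R-linear retraction (it is a split injection); and (2) for all nonempty disjoint subsets S, S' ⊆ T, the images of B_S and B_{S'} under the quotient map B_T → B_T / B_∅ intersect in {0}. -/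
open AddMonoidAlgebra

/-- The set of monomials `X^f` in `L = R[σ →₀ ℤ]` whose exponent `f` is nonnegative away
from `U`. -/
def monoSet (R : Type) [CommRing R] (σ : Type) (U : Finset σ) :
    Set (AddMonoidAlgebra R (σ →₀ ℤ)) :=
  {x | ∃ f : σ →₀ ℤ, (∀ j ∉ U, 0 ≤ f j) ∧ x = AddMonoidAlgebra.single f 1}

/-- `B_U`: the `R`-submodule of `L` spanned by the monomials `X^f` with `f j ≥ 0` for all
`j ∉ U`. -/
noncomputable def BM (R : Type) [CommRing R] (σ : Type) (U : Finset σ) :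
    Submodule R (AddMonoidAlgebra R (σ →₀ ℤ)) :=
  Submodule.span R (monoSet R σ U)

/-- The inclusion `B_S ⊆ B_T` for `S ⊆ T`. -/
theorem BM_mono (R : Type) [CommRing R] (σ : Type) {S T : Finset σ} (hST : S ⊆ T) :
    BM R σ S ≤ BM R σ T := by
  apply Submodule.span_mono
  rintro x ⟨f, hf, rfl⟩
  exact ⟨f, fun j hj => hf j (fun hS => hj (hST hS)), rfl⟩

/-- The exponent sets. -/
def expSet (σ : Type) (U : Finset σ) : Set (σ →₀ ℤ) :=
  {f | ∀ j ∉ U, 0 ≤ f j}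

theorem BM_eq_supported (R : Type) [CommRing R] (σ : Type) (U : Finset σ) :
    BM R σ U = AddMonoidAlgebra.supported R R (expSet σ U) := by
  rw [AddMonoidAlgebra.supported_eq_span_single]
  unfold BM
  congr 1
  ext x
  constructor
  · rintro ⟨f, hf, rfl⟩
    exact ⟨f, hf, rfl⟩
  · rintro ⟨f, hf, rfl⟩
    exact ⟨f, hf, rfl⟩

/-- (1) for `S ⊆ T`, the inclusion of `R`-modules `B_S ⊆ B_T` admits an
`R`-linear retraction; (2) for nonempty disjoint `S, S' ⊆ T`, the images of `B_S` and
`B_{S'}` under the quotient map `B_T → B_T / B_∅` intersect in `{0}`. -/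
theorem stmt_8 (R : Type) [CommRing R] (σ : Type) (T : Finset σ) :
    (∀ (S : Finset σ) (hST : S ⊆ T),
      ∃ r : BM R σ T →ₗ[R] BM R σ S,
        r ∘ₗ Submodule.inclusion (BM_mono R σ hST) = LinearMap.id) ∧
    (∀ S S' : Finset σ, S ⊆ T → S' ⊆ T → S.Nonempty → S'.Nonempty → Disjoint S S' →
      (((BM R σ S).comap (BM R σ T).subtype).map
          ((BM R σ ∅).comap (BM R σ T).subtype).mkQ) ⊓
      (((BM R σ S').comap (BM R σ T).subtype).map
          ((BM R σ ∅).comap (BM R σ T).subtype).mkQ) = ⊥) := by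
  classical
  constructor
  · intro S hST
    let ρ : AddMonoidAlgebra R (σ →₀ ℤ) →ₗ[R] AddMonoidAlgebra R (σ →₀ ℤ) :=
      (AddMonoidAlgebra.coeffLinearEquiv R).symm.toLinearMap ∘ₗ
        (Finsupp.supported R R (expSet σ S)).subtype ∘ₗ
        Finsupp.restrictDom R R (expSet σ S) ∘ₗ (AddMonoidAlgebra.coeffLinearEquiv R).toLinearMap
    have hρ : ∀ y, ρ y ∈ BM R σ S := by
      intro y; rw [BM_eq_supported]; exact (Finsupp.restrictDom R R (expSet σ S) y.coeff).2
    refine ⟨(ρ ∘ₗ (BM R σ T).subtype).codRestrict (BM R σ S) (fun y => hρ y), ?_⟩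
    refine LinearMap.ext fun x => Subtype.ext ?_
    have hx : x.1.coeff ∈ Finsupp.supported R R (expSet σ S) := by
      have := (BM_eq_supported R σ S).le x.2; exact this
    have key := LinearMap.congr_fun (Finsupp.restrictDom_comp_subtype (M := R) (R := R)
      (expSet σ S)) ⟨x.1.coeff, hx⟩
    have : ((Finsupp.restrictDom R R (expSet σ S)) x.1.coeff :
        (σ →₀ ℤ) →₀ R) = x.1.coeff := congrArg Subtype.val key
    show AddMonoidAlgebra.ofCoeff
      ((Finsupp.restrictDom R R (expSet σ S)) x.1.coeff : (σ →₀ ℤ) →₀ R) = x.1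
    rw [this]
  · intro S S' hST hS'T _ _ hdisj
    have hinf : BM R σ S ⊓ BM R σ S' ≤ BM R σ ∅ := by
      rw [BM_eq_supported R σ S, BM_eq_supported R σ S', BM_eq_supported R σ ∅]
      have hinter : AddMonoidAlgebra.supported R R (expSet σ S) ⊓
          AddMonoidAlgebra.supported R R (expSet σ S') ≤
          AddMonoidAlgebra.supported R R (expSet σ S ∩ expSet σ S') :=
        fun x hx => Set.subset_inter hx.1 hx.2
      refine hinter.trans ?_
      apply AddMonoidAlgebra.supported_mono
      rintro f ⟨hf1, hf2⟩ j -
      by_cases hj : j ∈ S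
      · exact hf2 j (Finset.disjoint_left.mp hdisj hj)
      · exact hf1 j hj
    rw [eq_bot_iff]
    rintro z ⟨hz1, hz2⟩
    obtain ⟨x, hx, rfl⟩ := hz1
    obtain ⟨y, hy, hxy⟩ := hz2
    -- hxy : mkQ y = mkQ x
    have hsub : y - x ∈ (BM R σ ∅).comap (BM R σ T).subtype := by
      rwa [Submodule.mkQ_apply, Submodule.mkQ_apply, Submodule.Quotient.eq] at hxy
    have hx0 : (x : AddMonoidAlgebra R (σ →₀ ℤ)) ∈ BM R σ ∅ := by
      have hxS' : (x : AddMonoidAlgebra R (σ →₀ ℤ)) ∈ BM R σ S' := by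
        have : (x : AddMonoidAlgebra R (σ →₀ ℤ)) =
            (y : AddMonoidAlgebra R (σ →₀ ℤ)) - ((y - x : BM R σ T) :
              AddMonoidAlgebra R (σ →₀ ℤ)) := by
          push_cast
          ring
        rw [this]
        exact Submodule.sub_mem _ hy (BM_mono R σ (Finset.empty_subset S') hsub)
      exact hinf ⟨hx, hxS'⟩
    rw [Submodule.mem_bot, Submodule.mkQ_apply, Submodule.Quotient.mk_eq_zero]
    exact hx0
end
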